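/- arXiv:1306.5322 — 2 statements merged into one kernel-verified Lean document; each statement's English description precedes it below -/
import Mathlib

section
/- Let m ≥ 1 be an integer, B > 0 and ε0 > 0 real numbers, and set δ = (2ε0)^{1/(m+1)}·B^{m/(m+1)}. If 2·(1 + mδ)^{(m+1)/m} ≤ B, then mδ/2 + A_m(δ)·ε0 < (m+1)·(B/2)^{m/(m+1)}·ε0^{1/(m+1)}. -/
open Real

/-- `A_m(δ) = δ^{−m} ∑_{j=0}^{m} C(m, j) (1 + jδ)^{m+1}`. -/
noncomputable def Am (m : ℕ) (δ : ℝ) : ℝ :=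
  (δ ^ m)⁻¹ * ∑ j ∈ Finset.range (m + 1), (m.choose j : ℝ) * (1 + j * δ) ^ (m + 1)

/-- Lemma 2.4. -/
theorem delta_Am_bound (m : ℕ) (hm : 1 ≤ m) (B ε0 : ℝ) (hB : 0 < B)
    (hε0 : 0 < ε0) (δ : ℝ)
    (hδ : δ = (2 * ε0) ^ (1 / ((m : ℝ) + 1)) * B ^ ((m : ℝ) / ((m : ℝ) + 1)))
    (hcond : 2 * (1 + m * δ) ^ (((m : ℝ) + 1) / m) ≤ B) :
    m * δ / 2 + Am m δ * ε0 <
      ((m : ℝ) + 1) * (B / 2) ^ ((m : ℝ) / ((m : ℝ) + 1)) *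
        ε0 ^ (1 / ((m : ℝ) + 1)) := by
  set t : ℝ := (m : ℝ) + 1 with ht
  have htpos : (0 : ℝ) < t := by positivity
  have hmpos : (0 : ℝ) < (m : ℝ) := by exact_mod_cast hm
  have hδpos : 0 < δ := by
    rw [hδ]; positivity
  -- δ^(m+1) = 2 ε0 B^m
  have hkey : δ ^ (m + 1) = 2 * ε0 * B ^ m := by
    have h1 : δ ^ (m + 1) = δ ^ ((m : ℝ) + 1) := by
      rw [← Real.rpow_natCast δ (m+1)]; push_cast; ring_nf
    rw [h1, hδ, Real.mul_rpow (by positivity) (by positivity),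
      ← Real.rpow_mul (by positivity), ← Real.rpow_mul hB.le]
    push_cast
    rw [one_div_mul_cancel (by positivity), div_mul_cancel₀ _ (by positivity : ((m:ℝ)+1) ≠ 0)]
    rw [Real.rpow_one, Real.rpow_natCast]
  -- 2^{1/t} * 2^{m/t} = 2
  have h2 : (2:ℝ) ^ (1/t) * (2:ℝ) ^ ((m:ℝ)/t) = 2 := by
    rw [← Real.rpow_add two_pos]
    have : 1/t + (m:ℝ)/t = 1 := by field_simp; ring
    rw [this, Real.rpow_one]
  -- RHS = (m+1) δ / 2
  have hRHS : ((m : ℝ) + 1) * (B / 2) ^ ((m : ℝ) / t) * ε0 ^ (1 / t)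
      = ((m : ℝ) + 1) * δ / 2 := by
    rw [hδ, Real.div_rpow hB.le (by norm_num), Real.mul_rpow (by norm_num) hε0.le]
    have h2pos : (0:ℝ) < (2:ℝ) ^ ((m:ℝ)/t) := by positivity
    field_simp
    linear_combination (-1:ℝ) * h2
  rw [hRHS]
  -- suffices Am * ε0 < δ/2
  have hsuff : Am m δ * ε0 < δ / 2 := by
    have hS : (∑ j ∈ Finset.range (m + 1), (m.choose j : ℝ) * (1 + j * δ) ^ (m + 1))
        < B ^ m := by
      have hstep : (∑ j ∈ Finset.range (m + 1), (m.choose j : ℝ) * (1 + j * δ) ^ (m + 1))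
          < ∑ j ∈ Finset.range (m + 1), (m.choose j : ℝ) * (1 + m * δ) ^ (m + 1) := by
        apply Finset.sum_lt_sum
        · intro j hj
          have hjm : (j:ℝ) ≤ (m:ℝ) := by
            exact_mod_cast Nat.lt_succ_iff.mp (Finset.mem_range.mp hj)
          have : (1 + (j:ℝ) * δ) ^ (m+1) ≤ (1 + (m:ℝ) * δ) ^ (m+1) := by
            apply pow_le_pow_left₀ (by positivity)
            nlinarith
          have hc : (0:ℝ) ≤ (m.choose j : ℝ) := by positivity
          nlinarith
        · refine ⟨0, Finset.mem_range.mpr (Nat.succ_pos m), ?_⟩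
          simp only [Nat.choose_zero_right, Nat.cast_one, one_mul, Nat.cast_zero, zero_mul,
            add_zero]
          have : (1:ℝ) < 1 + (m:ℝ) * δ := by nlinarith
          calc (1:ℝ)^(m+1) = 1 := one_pow _
            _ < (1 + (m:ℝ)*δ)^(m+1) := one_lt_pow₀ this (by omega)
      have hsum2 : (∑ j ∈ Finset.range (m + 1), (m.choose j : ℝ)) = 2 ^ m := by
        exact_mod_cast congrArg (Nat.cast : ℕ → ℝ) (Nat.sum_range_choose m)
      have hbound : (2:ℝ) ^ m * (1 + m * δ) ^ (m + 1) ≤ B ^ m := by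
        have hbase : (0:ℝ) < 1 + m * δ := by nlinarith
        have h3 : (2 * (1 + (m:ℝ) * δ) ^ (t / m)) ^ m ≤ B ^ m := by
          apply pow_le_pow_left₀ (by positivity) hcond
        have h4 : ((1 + (m:ℝ) * δ) ^ (t / m)) ^ m = (1 + (m:ℝ) * δ) ^ (m + 1) := by
          rw [← Real.rpow_natCast ((1 + (m:ℝ) * δ) ^ (t/m)) m, ← Real.rpow_mul hbase.le,
            div_mul_cancel₀ _ (ne_of_gt hmpos)]
          rw [ht, ← Real.rpow_natCast (1 + (m:ℝ)*δ) (m+1)]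
          push_cast; ring_nf
        calc (2:ℝ) ^ m * (1 + m * δ) ^ (m + 1)
            = (2 * (1 + (m:ℝ) * δ) ^ (t / m)) ^ m := by rw [mul_pow, h4]
          _ ≤ B ^ m := h3
      calc (∑ j ∈ Finset.range (m + 1), (m.choose j : ℝ) * (1 + j * δ) ^ (m + 1))
          < ∑ j ∈ Finset.range (m + 1), (m.choose j : ℝ) * (1 + m * δ) ^ (m + 1) := hstep
        _ = (2:ℝ) ^ m * (1 + m * δ) ^ (m + 1) := by rw [← Finset.sum_mul, hsum2]
        _ ≤ B ^ m := hbound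
    -- Am * ε0 = S * δ / (2 B^m)
    have hε0' : ε0 = δ ^ (m+1) / (2 * B ^ m) := by
      field_simp at hkey ⊢; linarith [hkey]
    rw [Am, hε0']
    have hBm : (0:ℝ) < B ^ m := by positivity
    have heq : ((δ ^ m)⁻¹ * ∑ j ∈ Finset.range (m + 1), (m.choose j : ℝ) * (1 + j * δ) ^ (m + 1))
        * (δ ^ (m+1) / (2 * B ^ m))
        = (∑ j ∈ Finset.range (m + 1), (m.choose j : ℝ) * (1 + j * δ) ^ (m + 1)) * δ
          / (2 * B ^ m) := by
      have hδm : δ ^ m ≠ 0 := by positivity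
      rw [pow_succ]; linear_combination ((∑ j ∈ Finset.range (m + 1), (m.choose j : ℝ) * (1 + j * δ) ^ (m + 1)) * δ / (2 * B ^ m)) * mul_inv_cancel₀ hδm
    rw [heq, div_lt_div_iff₀ (by positivity) two_pos]
    nlinarith [mul_lt_mul_of_pos_left hS hδpos]
  linarith
end

section
/- Let A ≥ 1 and q ≥ 987 be real numbers, set δ = π/(0.4923·q^{1/2}·(log q)²), and let β0 be a real number with 1/2 < β0 ≤ 1 − δ. Let x be a real number with x ≥ exp(exp(7.7)) and (0.4923·A/π)·q^{1/2}·(log q)² < (log x)/(log log x). Then x^{−β0}/(1−β0) + x^{β0−1}/β0 < 1.0043/(log x)^{A}. -/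
set_option maxHeartbeats 1000000

open Real

private lemma aux_poly (y : ℝ) (hy : 0 ≤ y) : (y / 4) ^ 4 ≤ Real.exp y := by
  have h1 : (y / 4) ^ 4 ≤ (Real.exp (y / 4)) ^ 4 := by
    apply pow_le_pow_left₀ (by positivity)
    have := Real.add_one_le_exp (y / 4)
    linarith
  have h2 : (Real.exp (y / 4)) ^ 4 = Real.exp y := by
    rw [← Real.exp_nat_mul]
    congr 1
    push_cast; ring
  linarith

private lemma aux_interp (L δ β0 : ℝ) (hL : 100 ≤ L) (hδ0 : 0 < δ) (hδ5 : δ ≤ 0.005)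
    (hβ1 : 1 / 2 < β0) (hβ2 : β0 ≤ 1 - δ) :
    Real.exp ((β0 - 1) * L) / β0 ≤ Real.exp (-(δ * L)) / (1 - δ) := by
  have hβ0 : 0 < β0 := by linarith
  have h1δ : 0 < 1 - δ := by linarith
  set u : ℝ := (1 - δ) - β0 with hu_def
  have hu0 : 0 ≤ u := by simp only [hu_def]; linarith
  have hexpone_lt : Real.exp 1 < 2.7182818286 := Real.exp_one_lt_d9
  have hexpone_gt : (2.7182818283 : ℝ) < Real.exp 1 := Real.exp_one_gt_d9
  have key : (1 - δ) * Real.exp (-(u * L)) ≤ β0 := by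
    rcases le_or_gt (u * L) 1 with h | h
    · -- small case: 1 - exp(-t) ≥ t exp(-t) ≥ t exp(-1) ≥ 0.36 t
      set t : ℝ := u * L with ht_def
      have ht0 : 0 ≤ t := by positivity
      have hme : Real.exp (-t) * Real.exp t = 1 := by
        rw [← Real.exp_add]; simp
      have h1 : Real.exp (-t) * (t + 1) ≤ 1 := by
        have := mul_le_mul_of_nonneg_left (Real.add_one_le_exp t) (Real.exp_pos (-t)).le
        calc Real.exp (-t) * (t + 1) ≤ Real.exp (-t) * Real.exp t := this
          _ = 1 := hme
      have h2 : t * Real.exp (-t) ≤ 1 - Real.exp (-t) := by nlinarith [Real.exp_pos (-t)]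
      have h3 : (0.36 : ℝ) ≤ Real.exp (-t) := by
        have hmono : Real.exp (-1 : ℝ) ≤ Real.exp (-t) := Real.exp_le_exp.mpr (by linarith)
        have hinv : Real.exp (-1 : ℝ) * Real.exp 1 = 1 := by
          rw [← Real.exp_add]; simp
        nlinarith [Real.exp_pos (-1 : ℝ)]
      have h4 : 0.36 * t ≤ 1 - Real.exp (-t) := by nlinarith
      have h5 : (36 : ℝ) * u ≤ 0.36 * t := by
        simp only [ht_def]
        nlinarith
      have h6 : u ≤ (1 - δ) * (1 - Real.exp (-t)) := by nlinarith [Real.exp_pos (-t)]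
      nlinarith
    · -- big case: exp(-t) ≤ exp(-1) ≤ 0.37 < 1/2 < β0
      have h1 : Real.exp (-(u * L)) ≤ Real.exp (-1 : ℝ) := Real.exp_le_exp.mpr (by linarith)
      have h2 : Real.exp (-1 : ℝ) ≤ 0.37 := by
        have hinv : Real.exp (-1 : ℝ) * Real.exp 1 = 1 := by
          rw [← Real.exp_add]; simp
        nlinarith [Real.exp_pos (-1 : ℝ)]
      nlinarith [Real.exp_pos (-(u * L))]
  have hsplit : Real.exp ((β0 - 1) * L) = Real.exp (-(δ * L)) * Real.exp (-(u * L)) := by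
    rw [← Real.exp_add]
    congr 1
    simp only [hu_def]; ring
  rw [div_le_div_iff₀ hβ0 h1δ, hsplit]
  nlinarith [mul_le_mul_of_nonneg_left key (Real.exp_pos (-(δ * L))).le]

private lemma aux_num (L δ : ℝ) (hL : 1096 ≤ L) (hδ0 : 0 < δ) (hδu : δ ≤ 0.00428) :
    0.13 * L ≤ 0.000001 * Real.exp (L / 2 - δ * L) := by
  have hL0 : (0 : ℝ) < L := by linarith
  have hp : ((0.4 * L) / 4) ^ 4 ≤ Real.exp (0.4 * L) := aux_poly _ (by positivity)
  have hp2 : 0.0001 * L ^ 4 ≤ Real.exp (0.4 * L) := by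
    have hr : ((0.4 * L) / 4) ^ 4 = 0.0001 * L ^ 4 := by ring
    rw [hr] at hp
    exact hp
  have he : Real.exp (0.4 * L) ≤ Real.exp (L / 2 - δ * L) := by
    apply Real.exp_le_exp.mpr
    nlinarith [mul_le_mul_of_nonneg_right hδu hL0.le]
  have hcube : (1096 : ℝ) ^ 3 ≤ L ^ 3 := pow_le_pow_left₀ (by norm_num) hL 3
  have hquart : (1316532736 : ℝ) * L ≤ L ^ 4 := by
    have h := mul_le_mul_of_nonneg_right hcube hL0.le
    have h2 : L ^ 3 * L = L ^ 4 := by ring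
    have h3 : ((1096 : ℝ) ^ 3) = 1316532736 := by norm_num
    rw [h2, h3] at h
    exact h
  calc 0.13 * L ≤ 0.0000000001 * (1316532736 * L) := by nlinarith
    _ ≤ 0.0000000001 * L ^ 4 := by linarith
    _ = 0.000001 * (0.0001 * L ^ 4) := by ring
    _ ≤ 0.000001 * Real.exp (0.4 * L) := by linarith
    _ ≤ 0.000001 * Real.exp (L / 2 - δ * L) := by linarith

private lemma aux_main (A L δ β0 : ℝ) (hA : 1 ≤ A) (hL : 1096 ≤ L)
    (hlogL : 7.7 ≤ Real.log L) (hδ0 : 0 < δ) (hδu : δ ≤ 0.00428)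
    (hβ1 : 1 / 2 < β0) (hβ2 : β0 ≤ 1 - δ) (hAD : A * Real.log L < δ * L) :
    Real.exp (-β0 * L) / (1 - β0) + Real.exp ((β0 - 1) * L) / β0 < 1.0043 / L ^ A := by
  have hL0 : (0 : ℝ) < L := by linarith
  have h1β : 0 < 1 - β0 := by linarith
  have hβ0 : 0 < β0 := by linarith
  have hδL : 7.7 < δ * L := by nlinarith
  -- term 2 bound
  have hterm2 : Real.exp ((β0 - 1) * L) / β0 ≤ 1.004299 * Real.exp (-(δ * L)) := by
    have h1 := aux_interp L δ β0 (by linarith) hδ0 (by linarith) hβ1 hβ2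
    have h2 : Real.exp (-(δ * L)) / (1 - δ) ≤ 1.004299 * Real.exp (-(δ * L)) := by
      rw [div_le_iff₀ (by linarith)]
      nlinarith [Real.exp_pos (-(δ * L))]
    linarith
  -- term 1 bound
  have hterm1 : Real.exp (-β0 * L) / (1 - β0) ≤ 0.000001 * Real.exp (-(δ * L)) := by
    have hb1 : Real.exp (-β0 * L) ≤ Real.exp (-(L / 2)) := by
      apply Real.exp_le_exp.mpr
      nlinarith
    have hb2 : Real.exp (-β0 * L) / (1 - β0) ≤ Real.exp (-(L / 2)) / δ := by
      apply div_le_div₀ (Real.exp_pos _).le hb1 hδ0 (by linarith)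
    have hinv : 1 / δ ≤ 0.13 * L := by
      rw [div_le_iff₀ hδ0]
      nlinarith
    have hb3 : Real.exp (-(L / 2)) / δ ≤ Real.exp (-(L / 2)) * (0.13 * L) := by
      calc Real.exp (-(L / 2)) / δ = Real.exp (-(L / 2)) * (1 / δ) := by ring
        _ ≤ Real.exp (-(L / 2)) * (0.13 * L) :=
            mul_le_mul_of_nonneg_left hinv (Real.exp_pos _).le
    have hnum := aux_num L δ hL hδ0 hδu
    have hsplitexp : Real.exp (-(δ * L)) = Real.exp (L / 2 - δ * L) * Real.exp (-(L / 2)) := by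
      rw [← Real.exp_add]; ring_nf
    have hb4 : Real.exp (-(L / 2)) * (0.13 * L) ≤ 0.000001 * Real.exp (-(δ * L)) := by
      rw [hsplitexp]
      nlinarith [mul_le_mul_of_nonneg_right hnum (Real.exp_pos (-(L / 2))).le]
    linarith
  -- final comparison with 1.0043 / L^A
  have hLA0 : (0 : ℝ) < L ^ A := Real.rpow_pos_of_pos hL0 A
  have hfin : Real.exp (-(δ * L)) < 1 / L ^ A := by
    rw [lt_div_iff₀ hLA0]
    have h1 : Real.exp (-(δ * L)) * L ^ A = Real.exp (Real.log L * A - δ * L) := by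
      rw [Real.rpow_def_of_pos hL0, ← Real.exp_add]; ring_nf
    rw [h1]
    calc Real.exp (Real.log L * A - δ * L) < Real.exp 0 := by
          apply Real.exp_lt_exp.mpr; nlinarith
      _ = 1 := Real.exp_zero
  calc Real.exp (-β0 * L) / (1 - β0) + Real.exp ((β0 - 1) * L) / β0
      ≤ 1.0043 * Real.exp (-(δ * L)) := by linarith
    _ < 1.0043 * (1 / L ^ A) := by nlinarith
    _ = 1.0043 / L ^ A := by ring

open Real in
/-- The Siegel-zero contribution bound used in the proof of Theorem 2. -/
theorem siegel_zero_contribution (A q : ℝ) (hA : 1 ≤ A) (hq : 987 ≤ q)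
    (δ : ℝ) (hδ : δ = π / (0.4923 * q ^ ((1 : ℝ) / 2) * Real.log q ^ 2))
    (β0 : ℝ) (hβ1 : 1 / 2 < β0) (hβ2 : β0 ≤ 1 - δ)
    (x : ℝ) (hx : Real.exp (Real.exp 7.7) ≤ x)
    (hcond : 0.4923 * A / π * q ^ ((1 : ℝ) / 2) * Real.log q ^ 2 <
      Real.log x / Real.log (Real.log x)) :
    x ^ (-β0) / (1 - β0) + x ^ (β0 - 1) / β0 < 1.0043 / Real.log x ^ A := by
  have hπu : π < 3.141593 := Real.pi_lt_d6
  have hπl : (3.141592 : ℝ) < π := Real.pi_gt_d6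
  have hexpone_lt : Real.exp 1 < 2.7182818286 := Real.exp_one_lt_d9
  have hexpone_gt : (2.7182818283 : ℝ) < Real.exp 1 := Real.exp_one_gt_d9
  have hq1 : (1 : ℝ) < q := by linarith
  have hx0 : (0 : ℝ) < x := lt_of_lt_of_le (Real.exp_pos _) hx
  set L : ℝ := Real.log x with hL_def
  have hLexp : Real.exp 7.7 ≤ L := by
    rw [hL_def, Real.le_log_iff_exp_le hx0]
    exact hx
  have hexp7 : (1096 : ℝ) ≤ Real.exp 7 := by
    have h : Real.exp 7 = Real.exp 1 ^ 7 := by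
      rw [← Real.exp_nat_mul]; norm_num
    rw [h]
    calc (1096 : ℝ) ≤ 2.7182818283 ^ 7 := by norm_num
      _ ≤ Real.exp 1 ^ 7 := by apply pow_le_pow_left₀ (by norm_num) hexpone_gt.le
  have hL1096 : (1096 : ℝ) ≤ L := by
    have : Real.exp 7 ≤ Real.exp 7.7 := Real.exp_le_exp.mpr (by norm_num)
    linarith
  have hL0 : (0 : ℝ) < L := by linarith
  have hlogL : (7.7 : ℝ) ≤ Real.log L := by
    rw [Real.le_log_iff_exp_le hL0]; exact hLexp
  have hlogL0 : (0 : ℝ) < Real.log L := by linarith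
  -- log q ≥ 6.89
  have hexp689 : Real.exp 6.89 ≤ 987 := by
    have hsum : Real.exp 6.89 * Real.exp 0.11 = Real.exp 7 := by
      rw [← Real.exp_add]; norm_num
    have h011 : (1.113025 : ℝ) ≤ Real.exp 0.11 := by
      have h : Real.exp 0.11 = (Real.exp 0.055) ^ 2 := by
        rw [← Real.exp_nat_mul]; norm_num
      rw [h]
      calc (1.113025 : ℝ) = 1.055 ^ 2 := by norm_num
        _ ≤ (Real.exp 0.055) ^ 2 := by
          apply pow_le_pow_left₀ (by norm_num)
          have := Real.add_one_le_exp (0.055 : ℝ); linarith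
    have h7u : Real.exp 7 ≤ 1096.64 := by
      have h : Real.exp 7 = Real.exp 1 ^ 7 := by
        rw [← Real.exp_nat_mul]; norm_num
      rw [h]
      calc Real.exp 1 ^ 7 ≤ 2.7182818286 ^ 7 := by
            apply pow_le_pow_left₀ (Real.exp_pos 1).le hexpone_lt.le
        _ ≤ 1096.64 := by norm_num
    nlinarith [Real.exp_pos (6.89 : ℝ), Real.exp_pos (0.11 : ℝ)]
  have hlq : (6.89 : ℝ) ≤ Real.log q := by
    rw [Real.le_log_iff_exp_le (by linarith)]
    linarith
  -- q^(1/2) ≥ 31.41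
  have hsq : (31.41 : ℝ) ≤ q ^ ((1 : ℝ) / 2) := by
    have h1 : ((31.41 : ℝ) ^ (2 : ℕ)) ^ ((1 : ℝ) / 2) = 31.41 := by
      rw [← Real.rpow_natCast (31.41 : ℝ) 2, ← Real.rpow_mul (by norm_num)]
      norm_num
    have h2 : ((31.41 : ℝ) ^ (2 : ℕ)) ^ ((1 : ℝ) / 2) ≤ q ^ ((1 : ℝ) / 2) := by
      apply Real.rpow_le_rpow (by positivity) (by nlinarith) (by norm_num)
    linarith [h1 ▸ h2]
  -- make the rpow and log atoms opaque
  set s : ℝ := q ^ ((1 : ℝ) / 2) with hs_def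
  set lq : ℝ := Real.log q with hlq_def
  have hx0' : (0 : ℝ) < x := hx0
  clear_value s lq
  clear hs_def hlq_def hx hx0 hLexp hexp7 hexp689
  have hs0 : (0 : ℝ) < s := by linarith
  have hlq0 : (0 : ℝ) < lq := by linarith
  have hD0 : (0 : ℝ) < 0.4923 * s * lq ^ 2 := by positivity
  have hlq2 : (47.4721 : ℝ) ≤ lq ^ 2 := by nlinarith
  have hDlb : (734.06 : ℝ) ≤ 0.4923 * s * lq ^ 2 := by
    have h := mul_le_mul hsq hlq2 (by norm_num) (by linarith : (0 : ℝ) ≤ s)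
    nlinarith
  have hδ0 : 0 < δ := by
    rw [hδ]; exact div_pos Real.pi_pos hD0
  have hδmul : δ * (0.4923 * s * lq ^ 2) = π := by
    rw [hδ]; field_simp
  have hcond' : A / δ < L / Real.log L := by
    have hE : 0.4923 * A / π * s * lq ^ 2 = A / δ := by
      rw [hδ]
      have hπ0 : π ≠ 0 := by linarith
      field_simp
    rw [hE] at hcond
    exact hcond
  have hδu : δ ≤ 0.00428 := by nlinarith
  -- turn hcond' into A * log L < δ * L
  have hAD : A * Real.log L < δ * L := by
    rw [div_lt_div_iff₀ hδ0 hlogL0] at hcond'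
    nlinarith
  have hrw1 : x ^ (-β0) = Real.exp (-β0 * L) := by
    rw [Real.rpow_def_of_pos hx0', ← hL_def]; ring_nf
  have hrw2 : x ^ (β0 - 1) = Real.exp ((β0 - 1) * L) := by
    rw [Real.rpow_def_of_pos hx0', ← hL_def]; ring_nf
  rw [hrw1, hrw2]
  exact aux_main A L δ β0 hA hL1096 hlogL hδ0 hδu hβ1 hβ2 hAD
end
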